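/- Along trajectories of the dimensionless tethered-system dynamics α̈ + 2(λ̇/(λ+1))(1+α̇) + 3 cos α sin α = 0 and λ̈ - (λ+1)[(1+α̇)² - 1 + 3cos²α] = -u + d, the time derivative of V = (1/2)[λ̇² + k₁λ² + k₂((1/3)α̇² + sin²α) + 3(λ+1)²((1/3)α̇² + sin²α)] equals λ̇[3(λ+1) - u + d + k₁λ - (2/3)k₂ α̇ (1+α̇)/(1+λ)]. -/

import Mathlib

theorem lyapunov_derivative (α lam u d : ℝ → ℝ) (k₁ k₂ : ℝ)
    (hα : Differentiable ℝ α) (hα' : Differentiable ℝ (deriv α))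
    (hl : Differentiable ℝ lam) (hl' : Differentiable ℝ (deriv lam))
    (hlam : ∀ τ, lam τ > -1)
    (hode1 : ∀ τ, deriv (deriv α) τ
      = -2 * (deriv lam τ / (lam τ + 1)) * (1 + deriv α τ)
        - 3 * Real.cos (α τ) * Real.sin (α τ))
    (hode2 : ∀ τ, deriv (deriv lam) τ
      = (lam τ + 1) * ((1 + deriv α τ) ^ 2 - 1 + 3 * (Real.cos (α τ)) ^ 2) - u τ + d τ)
    (τ : ℝ) :
    deriv (fun t => (1/2) * ((deriv lam t) ^ 2 + k₁ * (lam t) ^ 2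
      + k₂ * ((1/3) * (deriv α t) ^ 2 + (Real.sin (α t)) ^ 2)
      + 3 * (lam t + 1) ^ 2 * ((1/3) * (deriv α t) ^ 2 + (Real.sin (α t)) ^ 2))) τ
    = deriv lam τ * (3 * (lam τ + 1) - u τ + d τ + k₁ * lam τ
        - (2/3) * k₂ * deriv α τ * (1 + deriv α τ) / (1 + lam τ)) := by
  have hne : lam τ + 1 ≠ 0 := by have := hlam τ; linarith
  have hA : HasDerivAt α (deriv α τ) τ := (hα τ).hasDerivAt
  have hA' : HasDerivAt (deriv α) (deriv (deriv α) τ) τ := (hα' τ).hasDerivAt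
  have hL : HasDerivAt lam (deriv lam τ) τ := (hl τ).hasDerivAt
  have hL' : HasDerivAt (deriv lam) (deriv (deriv lam) τ) τ := (hl' τ).hasDerivAt
  have hW : HasDerivAt (fun t => (1/3) * (deriv α t) ^ 2 + (Real.sin (α t)) ^ 2)
      ((1/3) * (2 * deriv α τ * deriv (deriv α) τ)
        + 2 * Real.sin (α τ) * (Real.cos (α τ) * deriv α τ)) τ := by
    have h1 := (hA'.fun_pow 2).const_mul (1/3 : ℝ)
    have h2 := (hA.sin.fun_pow 2)
    refine (h1.add h2).congr_deriv ?_
    ring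
  have hV : HasDerivAt (fun t => (1/2) * ((deriv lam t) ^ 2 + k₁ * (lam t) ^ 2
      + k₂ * ((1/3) * (deriv α t) ^ 2 + (Real.sin (α t)) ^ 2)
      + 3 * (lam t + 1) ^ 2 * ((1/3) * (deriv α t) ^ 2 + (Real.sin (α t)) ^ 2)))
      ((1/2) * ((2 * deriv lam τ * deriv (deriv lam) τ)
        + k₁ * (2 * lam τ * deriv lam τ)
        + k₂ * ((1/3) * (2 * deriv α τ * deriv (deriv α) τ)
          + 2 * Real.sin (α τ) * (Real.cos (α τ) * deriv α τ))
        + (3 * (2 * (lam τ + 1) * deriv lam τ)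
            * ((1/3) * (deriv α τ) ^ 2 + (Real.sin (α τ)) ^ 2)
          + 3 * (lam τ + 1) ^ 2
            * ((1/3) * (2 * deriv α τ * deriv (deriv α) τ)
              + 2 * Real.sin (α τ) * (Real.cos (α τ) * deriv α τ))))) τ := by
    have hl2 := hL'.fun_pow 2
    have hlam2 := (hL.fun_pow 2).const_mul k₁
    have hk2 := hW.const_mul k₂
    have hlp1 : HasDerivAt (fun t => lam t + 1) (deriv lam τ) τ := hL.add_const 1
    have hprod := (((hlp1.fun_pow 2).const_mul (3:ℝ)).mul hW)
    have := ((hl2.add hlam2).add hk2).add hprod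
    refine (this.const_mul (1/2 : ℝ)).congr_deriv ?_
    ring
  rw [hV.deriv, hode1 τ, hode2 τ]
  have hsc : Real.cos (α τ) ^ 2 = 1 - Real.sin (α τ) ^ 2 := by
    have := Real.sin_sq_add_cos_sq (α τ); linarith
  rw [hsc]
  have h1ne : 1 + lam τ ≠ 0 := by have := hlam τ; linarith
  field_simp
  ring
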